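/- Let t ∈ ℕ and let f be a polynomial in 4 real variables with complex coefficients of total degree ≤ 2t+1. Then there exists a polynomial g in 3 real variables with complex coefficients of total degree ≤ t such that for every (a,b) ∈ S³, (1/σ(S¹)) ∫_{S¹} f(az, bz) dσ(z) = g(π(a,b)). -/

import Mathlib

open MeasureTheory Metric MvPolynomial

noncomputable section

/-- The unit circle in `ℂ`, with its 1-dimensional Hausdorff (arc-length) measure `μH[1]`. -/
def circ : Set ℂ := sphere 0 1

/-- Evaluate a polynomial in 4 real variables with complex coefficients at a point of `ℂ²`
via the real coordinates `(Re a, Im a, Re b, Im b)`. -/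
def evalC4 (p : ℂ × ℂ) (f : MvPolynomial (Fin 4) ℂ) : ℂ :=
  MvPolynomial.eval (fun i => (![p.1.re, p.1.im, p.2.re, p.2.im] i : ℂ)) f

/-- The complex Hopf map on `ℂ²`. -/
def hopfC (p : ℂ × ℂ) : ℝ × ℂ :=
  (Complex.normSq p.1 - Complex.normSq p.2, 2 * p.1 * star p.2)

/-- Evaluate a polynomial in 3 real variables with complex coefficients at a point of `ℝ × ℂ`
via the real coordinates `(ξ, Re η, Im η)`. -/
def evalC3 (p : ℝ × ℂ) (g : MvPolynomial (Fin 3) ℂ) : ℂ :=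
  MvPolynomial.eval (fun i => (![p.1, p.2.re, p.2.im] i : ℂ)) g

namespace Stmt9Aux

open Complex Set

/-! ### Measure-theoretic facts about the circle -/

lemma measurableSet_circ : MeasurableSet circ :=
  (isClosed_sphere).measurableSet

lemma circ_ne_top : (μH[1] : Measure ℂ) circ ≠ ⊤ := by
  have h1 : circ = circleMap 0 1 '' Set.Icc 0 (0 + 2 * Real.pi) := by
    rw [(periodic_circleMap 0 1).image_Icc Real.two_pi_pos 0, range_circleMap]
    simp [circ]
  have h2 : (μH[1] : Measure ℂ) (circleMap 0 1 '' Set.Icc 0 (0 + 2 * Real.pi)) ≤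
      (Real.nnabs 1 : ENNReal) ^ (1 : ℝ) * μH[1] (Set.Icc 0 (0 + 2 * Real.pi)) :=
    (lipschitzWith_circleMap 0 1).hausdorffMeasure_image_le zero_le_one _
  rw [h1]
  refine ne_top_of_le_ne_top ?_ h2
  rw [MeasureTheory.hausdorffMeasure_real]
  simp [Real.volume_Icc]
  exact ENNReal.mul_ne_top (by simp) ENNReal.ofReal_ne_top

lemma circ_ne_zero : (μH[1] : Measure ℂ) circ ≠ 0 := by
  intro h0
  have hre : LipschitzWith 1 Complex.re := by
    apply LipschitzWith.of_dist_le_mul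
    intro z w
    simp only [NNReal.coe_one, one_mul, Real.dist_eq, Complex.dist_eq, ← Complex.sub_re]
    exact Complex.abs_re_le_norm _
  have hsub : Set.Icc (-1 : ℝ) 1 ⊆ Complex.re '' circ := by
    intro x hx
    refine ⟨⟨x, Real.sqrt (1 - x ^ 2)⟩, ?_, rfl⟩
    have hx2 : x ^ 2 ≤ 1 := by
      rcases hx with ⟨h1, h2⟩; nlinarith
    simp only [circ, mem_sphere_iff_norm, sub_zero]
    rw [Complex.norm_def]
    have : Complex.normSq ⟨x, Real.sqrt (1 - x ^ 2)⟩ = 1 := by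
      rw [Complex.normSq_mk]
      have := Real.sq_sqrt (by linarith : (0:ℝ) ≤ 1 - x ^ 2)
      nlinarith
    rw [this, Real.sqrt_one]
  have h2 : (μH[1] : Measure ℝ) (Complex.re '' circ) ≤
      (1 : ENNReal) ^ (1 : ℝ) * μH[1] circ :=
    hre.hausdorffMeasure_image_le zero_le_one _
  have h3 : (μH[1] : Measure ℝ) (Set.Icc (-1 : ℝ) 1) ≤ 0 := by
    calc (μH[1] : Measure ℝ) (Set.Icc (-1 : ℝ) 1) ≤ μH[1] (Complex.re '' circ) :=
          measure_mono hsub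
      _ ≤ (1 : ENNReal) ^ (1 : ℝ) * μH[1] circ := h2
      _ = 0 := by rw [h0]; simp
  rw [MeasureTheory.hausdorffMeasure_real, Real.volume_Icc] at h3
  simp at h3
  linarith [h3]

lemma toReal_circ_ne_zero : ((μH[1] : Measure ℂ) circ).toReal ≠ 0 := by
  simp [ENNReal.toReal_ne_zero, circ_ne_zero, circ_ne_top]

/-- rotation by a unit complex number as an isometry equivalence -/
def rotIso (w : ℂ) (hw : ‖w‖ = 1) : ℂ ≃ᵢ ℂ where
  toEquiv := Equiv.mulLeft₀ w (by intro h; rw [h] at hw; simp at hw)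
  isometry_toFun := Isometry.of_dist_eq fun z₁ z₂ => by
    show dist (w * z₁) (w * z₂) = dist z₁ z₂
    simp only [Complex.dist_eq, ← mul_sub, norm_mul, hw, one_mul]

lemma rot_preimage (w : ℂ) (hw : ‖w‖ = 1) :
    (fun z => w * z) ⁻¹' circ = circ := by
  ext z
  simp [circ, mem_sphere_iff_norm, map_mul, hw]

lemma rot_integral (w : ℂ) (hw : ‖w‖ = 1) (F : ℂ → ℂ) :
    ∫ z in circ, F z ∂μH[1] = ∫ z in circ, F (w * z) ∂μH[1] := by
  have hmp := (rotIso w hw).measurePreserving_hausdorffMeasure 1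
  have hemb : MeasurableEmbedding (fun z : ℂ => w * z) :=
    (rotIso w hw).toHomeomorph.measurableEmbedding
  have := hmp.setIntegral_preimage_emb hemb F circ
  rw [← this]
  rw [show ⇑(rotIso w hw) = fun z => w * z from rfl, rot_preimage w hw]

lemma integrable_mon (c : ℂ) (m n : ℕ) :
    IntegrableOn (fun z : ℂ => c * (z ^ m * (starRingEnd ℂ z) ^ n)) circ μH[1] := by
  apply Measure.integrableOn_of_bounded (M := ‖c‖) circ_ne_top
  · exact (Continuous.mul continuous_const ((continuous_pow m).mul
      ((Complex.continuous_conj.pow n)))).aestronglyMeasurable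
  · rw [ae_restrict_iff' measurableSet_circ]
    refine Filter.Eventually.of_forall fun z hz => ?_
    have hz1 : ‖z‖ = 1 := by
      simpa [circ, mem_sphere_iff_norm] using hz
    simp only [norm_mul, norm_pow, map_pow, Complex.norm_conj, hz1]
    simp

lemma integral_mon (m n : ℕ) :
    ∫ z in circ, z ^ m * (starRingEnd ℂ z) ^ n ∂μH[1] =
      if m = n then (((μH[1] : Measure ℂ) circ).toReal : ℂ) else 0 := by
  by_cases h : m = n
  · subst h
    rw [if_pos rfl]
    rw [MeasureTheory.setIntegral_congr_fun measurableSet_circ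
      (g := fun _ => (1 : ℂ)) ?_]
    · rw [MeasureTheory.setIntegral_const]
      simp [Complex.real_smul]
      rfl
    · intro z hz
      have hz1 : ‖z‖ = 1 := by
        simpa [circ, mem_sphere_iff_norm] using hz
      have : z * starRingEnd ℂ z = 1 := by
        rw [Complex.mul_conj]
        norm_cast
        rw [Complex.normSq_eq_norm_sq, hz1]; norm_num
      simp only [← mul_pow, this, one_pow]
  · rw [if_neg h]
    set k : ℝ := (m : ℝ) - (n : ℝ) with hk
    have hk0 : k ≠ 0 := by
      simp only [hk, sub_ne_zero]
      exact_mod_cast fun hmn => h (Nat.cast_injective hmn)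
    set w : ℂ := Complex.exp ((Real.pi / k : ℝ) * Complex.I) with hwdef
    have hw : ‖w‖ = 1 := Complex.norm_exp_ofReal_mul_I _
    have key := rot_integral w hw (fun z => z ^ m * (starRingEnd ℂ z) ^ n)
    have hwpow : w ^ m * (starRingEnd ℂ w) ^ n = -1 := by
      rw [hwdef, ← Complex.exp_nat_mul, ← Complex.exp_conj, ← Complex.exp_nat_mul,
        ← Complex.exp_add]
      rw [show (starRingEnd ℂ) ((Real.pi / k : ℝ) * Complex.I) =
        -(((Real.pi / k : ℝ)) * Complex.I) by simp [Complex.conj_ofReal]]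
      rw [← Complex.exp_pi_mul_I]
      congr 1
      have hkc : ((m : ℂ) - n) = (k : ℂ) := by
        rw [hk]; push_cast; ring
      have hkC0 : (k : ℂ) ≠ 0 := by exact_mod_cast hk0
      have : ((m : ℂ) - n) * ((Real.pi / k : ℝ) * Complex.I) = (Real.pi : ℂ) * Complex.I := by
        rw [hkc]; push_cast; field_simp
      rw [← this]; ring
    have key2 : (∫ z in circ, z ^ m * (starRingEnd ℂ z) ^ n ∂μH[1]) =
        (w ^ m * (starRingEnd ℂ w) ^ n) * ∫ z in circ, z ^ m * (starRingEnd ℂ z) ^ n ∂μH[1] := by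
      conv_lhs => rw [key]
      have : (fun z : ℂ => (w * z) ^ m * (starRingEnd ℂ (w * z)) ^ n) =
          fun z : ℂ => (w ^ m * (starRingEnd ℂ w) ^ n) •
            (z ^ m * (starRingEnd ℂ z) ^ n) := by
        funext z
        simp only [map_mul, mul_pow, smul_eq_mul]
        ring
      rw [this, integral_smul, smul_eq_mul]
    rw [hwpow] at key2
    have h2 : (2 : ℂ) * ∫ z in circ, z ^ m * (starRingEnd ℂ z) ^ n ∂μH[1] = 0 := by
      linear_combination key2
    rcases mul_eq_zero.mp h2 with h3 | h3
    · norm_num at h3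
    · exact h3


/-! ### Polynomial machinery -/

lemma eval_aeval {j k : ℕ} (v : Fin k → ℂ) (h : Fin j → MvPolynomial (Fin k) ℂ)
    (f : MvPolynomial (Fin j) ℂ) :
    eval v (aeval h f) = eval (fun i => eval v (h i)) f := by
  rw [aeval_def, MvPolynomial.algebraMap_eq, ← MvPolynomial.eval_assoc]
  rfl

lemma totalDegree_aeval_le {j k : ℕ} (h : Fin j → MvPolynomial (Fin k) ℂ)
    (hh : ∀ i, (h i).totalDegree ≤ 1) (f : MvPolynomial (Fin j) ℂ) :
    (aeval h f).totalDegree ≤ f.totalDegree := by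
  conv_lhs => rw [f.as_sum]
  rw [map_sum]
  apply totalDegree_finsetSum_le
  intro d hd
  rw [aeval_monomial]
  refine le_trans (totalDegree_mul _ _) ?_
  have h1 : (algebraMap ℂ (MvPolynomial (Fin k) ℂ) (coeff d f)).totalDegree = 0 := by
    rw [MvPolynomial.algebraMap_eq]; exact totalDegree_C _
  rw [h1, zero_add]
  refine le_trans ?_ (le_totalDegree hd)
  rw [Finsupp.prod]
  refine le_trans (totalDegree_finset_prod _ _) ?_
  rw [Finsupp.sum]
  apply Finset.sum_le_sum
  intro i _
  calc (h i ^ d i).totalDegree ≤ d i * (h i).totalDegree := totalDegree_pow _ _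
    _ ≤ d i * 1 := Nat.mul_le_mul_left _ (hh i)
    _ = d i := mul_one _

def Φh : Fin 4 → MvPolynomial (Fin 4) ℂ :=
  ![(X 0 + X 1) * C (2 : ℂ)⁻¹, (X 0 - X 1) * C (2 * Complex.I)⁻¹,
    (X 2 + X 3) * C (2 : ℂ)⁻¹, (X 2 - X 3) * C (2 * Complex.I)⁻¹]

lemma deg_aux1 (i j : Fin 4) :
    ((X i + X j : MvPolynomial (Fin 4) ℂ) * C (2 : ℂ)⁻¹).totalDegree ≤ 1 := by
  refine le_trans (totalDegree_mul _ _) ?_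
  rw [totalDegree_C, add_zero]
  exact le_trans (totalDegree_add _ _) (by simp [totalDegree_X])

lemma deg_aux2 (i j : Fin 4) :
    ((X i - X j : MvPolynomial (Fin 4) ℂ) * C (2 * Complex.I)⁻¹).totalDegree ≤ 1 := by
  refine le_trans (totalDegree_mul _ _) ?_
  rw [totalDegree_C, add_zero, sub_eq_add_neg]
  refine le_trans (totalDegree_add _ _) ?_
  simp [totalDegree_X, totalDegree_neg]

lemma Φh_deg : ∀ i, (Φh i).totalDegree ≤ 1 := by
  intro i
  fin_cases i
  · exact deg_aux1 0 1
  · exact deg_aux2 0 1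
  · exact deg_aux1 2 3
  · exact deg_aux2 2 3

lemma Φh_eval_fun (p q : ℂ) :
    (fun i => ((![(p, q).1.re, (p, q).1.im, (p, q).2.re, (p, q).2.im] i : ℝ) : ℂ)) =
      fun i => eval ![p, starRingEnd ℂ p, q, starRingEnd ℂ q] (Φh i) := by
  have hI : (2 : ℂ) * Complex.I ≠ 0 := by simp [Complex.I_ne_zero]
  funext i
  fin_cases i
  · show ((p.re : ℝ) : ℂ) = eval ![p, starRingEnd ℂ p, q, starRingEnd ℂ q]
      ((X 0 + X 1) * (C (2 : ℂ)⁻¹))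
    simp only [map_mul, map_add, eval_X, eval_C, Matrix.cons_val_zero, Matrix.cons_val_one,
      Matrix.head_cons]
    rw [Complex.add_conj]; push_cast; ring
  · show ((p.im : ℝ) : ℂ) = eval ![p, starRingEnd ℂ p, q, starRingEnd ℂ q]
      ((X 0 - X 1) * (C (2 * Complex.I)⁻¹))
    simp only [map_mul, map_sub, eval_X, eval_C, Matrix.cons_val_zero, Matrix.cons_val_one,
      Matrix.head_cons]
    rw [Complex.sub_conj]
    field_simp
    push_cast; ring
  · show ((q.re : ℝ) : ℂ) = eval ![p, starRingEnd ℂ p, q, starRingEnd ℂ q]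
      ((X 2 + X 3) * (C (2 : ℂ)⁻¹))
    simp only [map_mul, map_add, eval_X, eval_C, Matrix.cons_val_zero, Matrix.cons_val_one,
      Matrix.head_cons, Matrix.cons_val_two, Matrix.cons_val_three, Matrix.tail_cons]
    rw [Complex.add_conj]; push_cast; ring
  · show ((q.im : ℝ) : ℂ) = eval ![p, starRingEnd ℂ p, q, starRingEnd ℂ q]
      ((X 2 - X 3) * (C (2 * Complex.I)⁻¹))
    simp only [map_mul, map_sub, eval_X, eval_C, Matrix.cons_val_zero, Matrix.cons_val_one,
      Matrix.head_cons, Matrix.cons_val_two, Matrix.cons_val_three, Matrix.tail_cons]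
    rw [Complex.sub_conj]
    field_simp
    push_cast; ring

lemma evalC4_eq (p q : ℂ) (f : MvPolynomial (Fin 4) ℂ) :
    evalC4 (p, q) f = eval ![p, starRingEnd ℂ p, q, starRingEnd ℂ q] (aeval Φh f) := by
  rw [eval_aeval]
  unfold evalC4
  rw [Φh_eval_fun]

def Ψh : Fin 3 → MvPolynomial (Fin 3) ℂ :=
  ![X 0, X 1 + C Complex.I * X 2, X 1 - C Complex.I * X 2]

lemma deg_aux3 (c : ℂ) (i j : Fin 3) :
    ((X i + C c * X j : MvPolynomial (Fin 3) ℂ)).totalDegree ≤ 1 := by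
  refine le_trans (totalDegree_add _ _) ?_
  refine max_le (by simp [totalDegree_X]) ?_
  refine le_trans (totalDegree_mul _ _) ?_
  simp [totalDegree_C, totalDegree_X]

lemma deg_aux4 (c : ℂ) (i j : Fin 3) :
    ((X i - C c * X j : MvPolynomial (Fin 3) ℂ)).totalDegree ≤ 1 := by
  rw [sub_eq_add_neg, ← neg_mul, ← map_neg]
  exact deg_aux3 (-c) i j

lemma Ψh_deg : ∀ i, (Ψh i).totalDegree ≤ 1 := by
  intro i
  fin_cases i
  · show (X 0 : MvPolynomial (Fin 3) ℂ).totalDegree ≤ 1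
    simp [totalDegree_X]
  · exact deg_aux3 Complex.I 1 2
  · exact deg_aux4 Complex.I 1 2

lemma Ψh_eval_fun (ξ : ℝ) (η : ℂ) :
    (fun i => eval (fun j => ((![(ξ, η).1, (ξ, η).2.re, (ξ, η).2.im] j : ℝ) : ℂ)) (Ψh i)) =
      ![(ξ : ℂ), η, starRingEnd ℂ η] := by
  funext i
  fin_cases i
  · show eval (fun j => ((![(ξ, η).1, (ξ, η).2.re, (ξ, η).2.im] j : ℝ) : ℂ)) (X 0) = (ξ : ℂ)
    simp
  · show eval (fun j => ((![(ξ, η).1, (ξ, η).2.re, (ξ, η).2.im] j : ℝ) : ℂ))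
      (X 1 + C Complex.I * X 2) = η
    simp only [map_add, map_mul, eval_X, eval_C]
    norm_num
    rw [mul_comm]
    exact Complex.re_add_im η
  · show eval (fun j => ((![(ξ, η).1, (ξ, η).2.re, (ξ, η).2.im] j : ℝ) : ℂ))
      (X 1 - C Complex.I * X 2) = starRingEnd ℂ η
    simp only [map_sub, map_mul, eval_X, eval_C]
    norm_num
    apply Complex.ext <;> simp

lemma evalC3_eq (ξ : ℝ) (η : ℂ) (g : MvPolynomial (Fin 3) ℂ) :
    evalC3 (ξ, η) (aeval Ψh g) = eval ![(ξ : ℂ), η, starRingEnd ℂ η] g := by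
  unfold evalC3
  rw [eval_aeval, Ψh_eval_fun]

def P (d : Fin 4 →₀ ℕ) : MvPolynomial (Fin 3) ℂ :=
  if d 1 ≤ d 0 then
    ((1 + X 0) * C (2 : ℂ)⁻¹) ^ d 1 * ((1 - X 0) * C (2 : ℂ)⁻¹) ^ d 2 *
      (X 1 * C (2 : ℂ)⁻¹) ^ (d 0 - d 1)
  else
    ((1 + X 0) * C (2 : ℂ)⁻¹) ^ d 0 * ((1 - X 0) * C (2 : ℂ)⁻¹) ^ d 3 *
      (X 2 * C (2 : ℂ)⁻¹) ^ (d 1 - d 0)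

lemma P_deg (d : Fin 4 →₀ ℕ) (hd : d 0 + d 2 = d 1 + d 3) :
    (P d).totalDegree ≤ d 0 + d 2 := by
  have key : ∀ (p1 p2 p3 : MvPolynomial (Fin 3) ℂ) (n1 n2 n3 : ℕ),
      p1.totalDegree ≤ 1 → p2.totalDegree ≤ 1 → p3.totalDegree ≤ 1 →
      (p1 ^ n1 * p2 ^ n2 * p3 ^ n3).totalDegree ≤ n1 + n2 + n3 := by
    intro p1 p2 p3 n1 n2 n3 h1 h2 h3
    refine le_trans (totalDegree_mul _ _) ?_
    have e1 : (p1 ^ n1 * p2 ^ n2).totalDegree ≤ n1 + n2 := by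
      refine le_trans (totalDegree_mul _ _) ?_
      have := le_trans (totalDegree_pow p1 n1) (Nat.mul_le_mul_left n1 h1)
      have := le_trans (totalDegree_pow p2 n2) (Nat.mul_le_mul_left n2 h2)
      omega
    have e3 := le_trans (totalDegree_pow p3 n3) (Nat.mul_le_mul_left n3 h3)
    omega
  have b1 : ((1 + X 0 : MvPolynomial (Fin 3) ℂ) * C (2 : ℂ)⁻¹).totalDegree ≤ 1 := by
    refine le_trans (totalDegree_mul _ _) ?_
    rw [totalDegree_C, add_zero]
    exact le_trans (totalDegree_add _ _) (by simp [totalDegree_X, totalDegree_one])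
  have b2 : ((1 - X 0 : MvPolynomial (Fin 3) ℂ) * C (2 : ℂ)⁻¹).totalDegree ≤ 1 := by
    refine le_trans (totalDegree_mul _ _) ?_
    rw [totalDegree_C, add_zero, sub_eq_add_neg]
    exact le_trans (totalDegree_add _ _)
      (by simp [totalDegree_X, totalDegree_one, totalDegree_neg])
  have b3 : ((X 1 : MvPolynomial (Fin 3) ℂ) * C (2 : ℂ)⁻¹).totalDegree ≤ 1 := by
    refine le_trans (totalDegree_mul _ _) ?_
    simp [totalDegree_C, totalDegree_X]
  have b4 : ((X 2 : MvPolynomial (Fin 3) ℂ) * C (2 : ℂ)⁻¹).totalDegree ≤ 1 := by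
    refine le_trans (totalDegree_mul _ _) ?_
    simp [totalDegree_C, totalDegree_X]
  unfold P
  split_ifs with hcase
  · exact le_trans (key _ _ _ _ _ _ b1 b2 b3) (by omega)
  · exact le_trans (key _ _ _ _ _ _ b1 b2 b4) (by omega)

lemma P_eval (a b : ℂ) (hab : Complex.normSq a + Complex.normSq b = 1)
    (d : Fin 4 →₀ ℕ) (hd : d 0 + d 2 = d 1 + d 3) :
    eval ![((Complex.normSq a - Complex.normSq b : ℝ) : ℂ), 2 * a * starRingEnd ℂ b,
        starRingEnd ℂ (2 * a * starRingEnd ℂ b)] (P d) =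
      a ^ d 0 * starRingEnd ℂ a ^ d 1 * b ^ d 2 * starRingEnd ℂ b ^ d 3 := by
  have hu : ((Complex.normSq a : ℝ) : ℂ) = a * starRingEnd ℂ a := (Complex.mul_conj a).symm
  have hv : ((Complex.normSq b : ℝ) : ℂ) = b * starRingEnd ℂ b := (Complex.mul_conj b).symm
  have hsum : a * starRingEnd ℂ a + b * starRingEnd ℂ b = 1 := by
    rw [← hu, ← hv]
    exact_mod_cast congrArg (fun x : ℝ => (x : ℂ)) hab
  have e1 : (1 + (((Complex.normSq a - Complex.normSq b : ℝ) : ℂ))) * (2 : ℂ)⁻¹ =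
      a * starRingEnd ℂ a := by
    push_cast
    rw [hu, hv]
    linear_combination (-(2 : ℂ)⁻¹) * hsum
  have e2 : (1 - (((Complex.normSq a - Complex.normSq b : ℝ) : ℂ))) * (2 : ℂ)⁻¹ =
      b * starRingEnd ℂ b := by
    push_cast
    rw [hu, hv]
    linear_combination (-(2 : ℂ)⁻¹) * hsum
  unfold P
  split_ifs with hcase
  · obtain ⟨k, hk⟩ : ∃ k, d 0 = d 1 + k := ⟨d 0 - d 1, by omega⟩
    have hk2 : d 3 = d 2 + k := by omega
    simp only [map_mul, map_pow, map_add, map_sub, map_one, eval_X, eval_C,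
      Matrix.cons_val_zero, Matrix.cons_val_one, Matrix.head_cons, Fin.isValue]
    have e3 : (2 * a * starRingEnd ℂ b) * (2 : ℂ)⁻¹ = a * starRingEnd ℂ b := by ring
    rw [e1, e2, e3, hk, hk2]
    simp only [Nat.add_sub_cancel_left, pow_add, mul_pow]
    ring
  · obtain ⟨k, hk⟩ : ∃ k, d 1 = d 0 + k := ⟨d 1 - d 0, by omega⟩
    have hk2 : d 2 = d 3 + k := by omega
    simp only [map_mul, map_pow, map_add, map_sub, map_one, eval_X, eval_C,
      Matrix.cons_val_zero, Matrix.cons_val_one, Matrix.head_cons,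
      Matrix.cons_val_two, Matrix.tail_cons, Fin.isValue, Complex.conj_conj]
    have h2 : (starRingEnd ℂ) (2 : ℂ) = 2 := by apply Complex.ext <;> simp
    rw [e1, e2, h2, hk, hk2]
    have e4 : (2 : ℂ) * starRingEnd ℂ a * b * (2 : ℂ)⁻¹ = starRingEnd ℂ a * b := by ring
    rw [e4]
    simp only [Nat.add_sub_cancel_left, pow_add, mul_pow]
    ring

end Stmt9Aux


theorem stmt9 (t : ℕ) (f : MvPolynomial (Fin 4) ℂ) (hf : f.totalDegree ≤ 2 * t + 1) :
    ∃ g : MvPolynomial (Fin 3) ℂ, g.totalDegree ≤ t ∧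
      ∀ a b : ℂ, Complex.normSq a + Complex.normSq b = 1 →
        (μH[1] circ).toReal⁻¹ • ∫ z in circ, evalC4 (a * z, b * z) f ∂μH[1] =
          evalC3 (hopfC (a, b)) g := by
  classical
  set q : MvPolynomial (Fin 4) ℂ := aeval Stmt9Aux.Φh f with hq
  have hqdeg : q.totalDegree ≤ 2 * t + 1 :=
    le_trans (Stmt9Aux.totalDegree_aeval_le _ Stmt9Aux.Φh_deg f) hf
  set G : MvPolynomial (Fin 3) ℂ := ∑ d ∈ q.support,
      if d 0 + d 2 = d 1 + d 3 then C (coeff d q) * Stmt9Aux.P d else 0 with hG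
  refine ⟨aeval Stmt9Aux.Ψh G, ?_, ?_⟩
  · refine le_trans (Stmt9Aux.totalDegree_aeval_le _ Stmt9Aux.Ψh_deg _) ?_
    rw [hG]
    apply totalDegree_finsetSum_le
    intro d hd
    split_ifs with hcond
    · refine le_trans (totalDegree_mul _ _) ?_
      rw [totalDegree_C, zero_add]
      refine le_trans (Stmt9Aux.P_deg d hcond) ?_
      have h1 : (d.sum fun _ e => e) ≤ 2 * t + 1 := le_trans (le_totalDegree hd) hqdeg
      rw [Finsupp.sum_fintype _ _ (fun _ => rfl), Fin.sum_univ_four] at h1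
      omega
    · simp
  · intro a b hab
    have hr : ((((μH[1] : Measure ℂ) circ).toReal : ℝ) : ℂ) ≠ 0 :=
      Complex.ofReal_ne_zero.mpr Stmt9Aux.toReal_circ_ne_zero
    have hint : (fun z : ℂ => evalC4 (a * z, b * z) f) = fun z : ℂ =>
        ∑ d ∈ q.support,
          (coeff d q * (a ^ d 0 * starRingEnd ℂ a ^ d 1 * b ^ d 2 * starRingEnd ℂ b ^ d 3)) *
            (z ^ (d 0 + d 2) * starRingEnd ℂ z ^ (d 1 + d 3)) := by
      funext z
      rw [Stmt9Aux.evalC4_eq, ← hq, eval_eq']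
      apply Finset.sum_congr rfl
      intro d _
      rw [Fin.prod_univ_four]
      simp only [Matrix.cons_val_zero, Matrix.cons_val_one, Matrix.head_cons,
        Matrix.cons_val_two, Matrix.tail_cons, Matrix.cons_val_three, map_mul]
      simp only [mul_pow, pow_add]
      ring
    have hterm : ∀ d ∈ q.support,
        (∫ z in circ, (coeff d q * (a ^ d 0 * starRingEnd ℂ a ^ d 1 * b ^ d 2 *
            starRingEnd ℂ b ^ d 3)) *
            (z ^ (d 0 + d 2) * starRingEnd ℂ z ^ (d 1 + d 3)) ∂μH[1])
          = (coeff d q * (a ^ d 0 * starRingEnd ℂ a ^ d 1 * b ^ d 2 * starRingEnd ℂ b ^ d 3)) *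
            (if d 0 + d 2 = d 1 + d 3 then (((μH[1] : Measure ℂ) circ).toReal : ℂ) else 0) := by
      intro d _
      set cd : ℂ := coeff d q * (a ^ d 0 * starRingEnd ℂ a ^ d 1 * b ^ d 2 *
        starRingEnd ℂ b ^ d 3) with hcd
      calc (∫ z in circ, cd * (z ^ (d 0 + d 2) * starRingEnd ℂ z ^ (d 1 + d 3)) ∂μH[1])
          = cd • ∫ z in circ, z ^ (d 0 + d 2) * starRingEnd ℂ z ^ (d 1 + d 3) ∂μH[1] := by
            rw [← integral_smul]
            simp only [smul_eq_mul]
        _ = cd * (if d 0 + d 2 = d 1 + d 3 then (((μH[1] : Measure ℂ) circ).toReal : ℂ) else 0) := by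
            rw [Stmt9Aux.integral_mon, smul_eq_mul]
    have hRHS : evalC3 (hopfC (a, b)) (aeval Stmt9Aux.Ψh G) = ∑ d ∈ q.support,
        if d 0 + d 2 = d 1 + d 3 then
          coeff d q * (a ^ d 0 * starRingEnd ℂ a ^ d 1 * b ^ d 2 * starRingEnd ℂ b ^ d 3)
        else 0 := by
      rw [show hopfC (a, b) =
        ((Complex.normSq a - Complex.normSq b : ℝ), 2 * a * starRingEnd ℂ b) from rfl]
      rw [Stmt9Aux.evalC3_eq, hG, map_sum]
      apply Finset.sum_congr rfl
      intro d _
      split_ifs with hcond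
      · rw [map_mul, eval_C, Stmt9Aux.P_eval a b hab d hcond]
      · simp
    rw [hint, MeasureTheory.integral_finset_sum _
      (fun d _ => Stmt9Aux.integrable_mon _ _ _), hRHS,
      Finset.sum_congr rfl hterm, Finset.smul_sum]
    apply Finset.sum_congr rfl
    intro d _
    split_ifs with hcond
    · rw [Complex.real_smul, Complex.ofReal_inv]
      field_simp
    · simp
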